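/- Let W, M, f be a conditional model satisfying β1–β4 and β5w. Suppose A, B ∈ M with f(B, A) = B (B independent of A) and A ∪ B = W. Then A = W or B = W. -/
import Mathlib


/-- Semantic 'independence and proof': in a conditional model with β1–β4 and β5w,
if `f(B,A) = B` and `A ∪ B = W`, then `A = W` or `B = W`. -/
theorem cond_model_indep_proof {W : Type*} (M : Set (Set W))
    (hM_univ : (Set.univ : Set W) ∈ M)
    (hM_inter : ∀ A ∈ M, ∀ B ∈ M, A ∩ B ∈ M)
    (hM_compl : ∀ A ∈ M, Aᶜ ∈ M)
    (f : Set W → Set W → Set W)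
    (hf : ∀ A ∈ M, ∀ B ∈ M, f B A ∈ M)
    (hβ1 : ∀ A ∈ M, ∀ B ∈ M, A ⊆ B → A ≠ ∅ → f B A = Set.univ)
    (hβ2 : ∀ A ∈ M, ∀ B ∈ M, ∀ C ∈ M, f (B ∪ C) A ⊆ f B A ∪ f C A)
    (hβ3 : ∀ A ∈ M, ∀ B ∈ M, A ∩ f B A ⊆ B)
    (hβ4 : ∀ A ∈ M, ∀ B ∈ M, f Bᶜ A = (f B A)ᶜ)
    (hβ5w : ∀ A ∈ M, ∀ B ∈ M, f B A = B → f B Aᶜ = B) :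
    ∀ A ∈ M, ∀ B ∈ M, f B A = B → A ∪ B = Set.univ →
      A = Set.univ ∨ B = Set.univ := by
  intro A hA B hB hfBA hAB
  by_cases hAc : Aᶜ = (∅ : Set W)
  · left
    rw [← Set.compl_empty, ← hAc, compl_compl]
  · right
    have hsub : Aᶜ ⊆ B := by
      intro x hx
      have := Set.eq_univ_iff_forall.mp hAB x
      rcases this with h | h
      · exact absurd h hx
      · exact h
    have h1 := hβ1 Aᶜ (hM_compl A hA) B hB hsub hAc
    have h2 := hβ5w A hA B hB hfBA
    rw [h2] at h1
    exact h1
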